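/- The number of partitions μ = (μ_1, …, μ_n) with μ_1 ≥ ⋯ ≥ μ_n = 0 and μ_i ≤ (n−i)m for all i equals the Fuss–Catalan number (1/(mn+1))·binomial((m+1)n, n). -/

import Mathlib

open Finset

namespace Shi

/-- The set of monotone sequences `w : Fin y → ℕ` with `w i + m*(y-i) ≤ x`
(lattice paths weakly below the line of slope `1/m`). -/
def Bset (m x y : ℕ) : Finset (Fin y → ℕ) :=
  (Fintype.piFinset fun _ => Finset.range (x + 1)).filter
    fun w => Monotone w ∧ ∀ i : Fin y, w i + m * (y - (i : ℕ)) ≤ x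

lemma mem_Bset {m x y : ℕ} {w : Fin y → ℕ} :
    w ∈ Bset m x y ↔ Monotone w ∧ ∀ i : Fin y, w i + m * (y - (i : ℕ)) ≤ x := by
  simp only [Bset, Finset.mem_filter, Fintype.mem_piFinset, Finset.mem_range]
  refine ⟨fun h => h.2, fun h => ⟨fun i => ?_, h⟩⟩
  have := h.2 i
  omega

/-- The ballot count. -/
def B (m x y : ℕ) : ℕ := (Bset m x y).card

lemma B_zero (m x : ℕ) : B m x 0 = 1 := by
  rw [B, Finset.card_eq_one]
  refine ⟨fun i => i.elim0, ?_⟩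
  ext w
  simp only [mem_Bset, Finset.mem_singleton]
  constructor
  · intro _; funext i; exact i.elim0
  · rintro rfl
    exact ⟨by intro i; exact i.elim0, fun i => i.elim0⟩

lemma B_eq_zero (m x y : ℕ) (h : x < m * (y + 1)) : B m x (y + 1) = 0 := by
  rw [B, Finset.card_eq_zero, Finset.eq_empty_iff_forall_notMem]
  intro w hw
  have h2 := (mem_Bset.mp hw).2 0
  simp only [Fin.val_zero, Nat.sub_zero] at h2
  omega

lemma B_rec (m x y : ℕ) (h : m * (y + 1) ≤ x + 1) :
    B m (x + 1) (y + 1) = B m x (y + 1) + B m (x + 1) y := by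
  classical
  have h1 : ((Bset m (x + 1) (y + 1)).filter fun w => w 0 = 0).card = B m (x + 1) y := by
    rw [B]
    refine Finset.card_nbij' (fun w => w ∘ Fin.succ) (fun v => Fin.cons 0 v) ?_ ?_ ?_ ?_
    · intro w hw
      rw [Finset.mem_coe, Finset.mem_filter] at hw
      obtain ⟨hmem, _⟩ := hw
      rw [mem_Bset] at hmem
      rw [Finset.mem_coe, mem_Bset]
      constructor
      · intro a b hab
        exact hmem.1 (Fin.succ_le_succ_iff.mpr hab)
      · intro i
        have h2 := hmem.2 i.succ
        have e : (y + 1) - (i.succ : ℕ) = y - (i : ℕ) := by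
          simp only [Fin.val_succ]; omega
        rw [e] at h2
        exact h2
    · intro v hv
      rw [Finset.mem_coe, mem_Bset] at hv
      rw [Finset.mem_coe, Finset.mem_filter, mem_Bset]
      have hmono : Monotone (Fin.cons (0 : ℕ) v) := by
        intro a b hab
        induction a using Fin.cases with
        | zero => simp
        | succ a =>
          induction b using Fin.cases with
          | zero =>
            exfalso
            have h1 := Fin.le_def.mp hab
            simp [Fin.val_succ] at h1
          | succ b =>
            simp only [Fin.cons_succ]
            exact hv.1 (Fin.succ_le_succ_iff.mp hab)
      refine ⟨⟨hmono, ?_⟩, ?_⟩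
      · intro i
        induction i using Fin.cases with
        | zero =>
          simp only [Fin.cons_zero, Fin.val_zero, Nat.sub_zero]
          omega
        | succ a =>
          simp only [Fin.cons_succ, Fin.val_succ]
          have h2 := hv.2 a
          have e : y + 1 - ((a : ℕ) + 1) = y - (a : ℕ) := by omega
          rw [e]
          omega
      · simp
    · intro w hw
      rw [Finset.mem_coe, Finset.mem_filter] at hw
      funext i
      induction i using Fin.cases with
      | zero => simpa using hw.2.symm
      | succ a => simp
    · intro v _
      funext i
      simp
  have h2 : ((Bset m (x + 1) (y + 1)).filter fun w => ¬ w 0 = 0).card = B m x (y + 1) := by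
    clear h1
    rw [B]
    refine Finset.card_nbij' (fun w i => w i - 1) (fun v i => v i + 1) ?_ ?_ ?_ ?_
    · intro w hw
      rw [Finset.mem_coe, Finset.mem_filter] at hw
      obtain ⟨hmem, hne⟩ := hw
      rw [mem_Bset] at hmem
      rw [Finset.mem_coe, mem_Bset]
      have hpos : ∀ i, 1 ≤ w i := by
        intro i
        have := hmem.1 (Fin.zero_le i)
        omega
      constructor
      · intro a b hab
        exact Nat.sub_le_sub_right (hmem.1 hab) 1
      · intro i
        have ha := hmem.2 i
        have hb := hpos i
        show w i - 1 + m * (y + 1 - (i : ℕ)) ≤ x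
        omega
    · intro v hv
      rw [Finset.mem_coe, mem_Bset] at hv
      rw [Finset.mem_coe, Finset.mem_filter, mem_Bset]
      refine ⟨⟨?_, ?_⟩, ?_⟩
      · intro a b hab
        exact Nat.add_le_add_right (hv.1 hab) 1
      · intro i
        have := hv.2 i
        show v i + 1 + m * (y + 1 - (i : ℕ)) ≤ x + 1
        omega
      · show ¬ v 0 + 1 = 0
        omega
    · intro w hw
      rw [Finset.mem_coe, Finset.mem_filter, mem_Bset] at hw
      funext i
      have ha := hw.1.1 (Fin.zero_le i)
      have hb : ¬ w 0 = 0 := hw.2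
      show w i - 1 + 1 = w i
      omega
    · intro v _
      funext i
      show v i + 1 - 1 = v i
      omega
  have hsplit := Finset.card_filter_add_card_filter_not
    (s := Bset m (x + 1) (y + 1)) (p := fun w => w 0 = 0)
  rw [B, ← hsplit, h1, h2]
  exact Nat.add_comm _ _

lemma B_formula (m : ℕ) (hm : 1 ≤ m) : ∀ y x, m * y ≤ x →
    (x + 1) * B m x y = (x + 1 - m * y) * Nat.choose (x + y) y := by
  intro y
  induction y with
  | zero => intro x _; simp [B_zero]
  | succ y ih =>
    intro x hx
    induction x, hx using Nat.le_induction with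
    | base =>
      have hpos : 1 ≤ m * (y + 1) := Nat.mul_pos hm (Nat.succ_pos y)
      obtain ⟨x', hx'⟩ : ∃ x', m * (y + 1) = x' + 1 := ⟨m * (y + 1) - 1, by omega⟩
      have hmy : m * y ≤ m * (y + 1) := Nat.mul_le_mul_left m (by omega)
      have hrec := B_rec m x' y (by omega)
      have hz : B m x' (y + 1) = 0 := B_eq_zero m x' y (by omega)
      rw [hx', hrec, hz, Nat.zero_add]
      have hih := ih (x' + 1) (by omega)
      have hsub : x' + 1 + 1 - (x' + 1) = 1 := by omega
      have hsub2 : x' + 1 + 1 - m * y = m + 1 := by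
        have hmm : m * (y + 1) = m * y + m := by ring
        omega
      rw [hsub, Nat.one_mul, hih, hsub2]
      have hkey := Nat.add_one_mul_choose_eq (x' + 1 + y) y
      have hc : x' + 1 + y + 1 = (m + 1) * (y + 1) := by
        have hmm : m * (y + 1) = x' + 1 := hx'
        nlinarith
      apply Nat.eq_of_mul_eq_mul_left (show 0 < y + 1 by omega)
      calc (y + 1) * ((m + 1) * Nat.choose (x' + 1 + y) y)
          = ((m + 1) * (y + 1)) * Nat.choose (x' + 1 + y) y := by ring
        _ = (x' + 1 + y + 1) * Nat.choose (x' + 1 + y) y := by rw [hc]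
        _ = Nat.choose (x' + 1 + y + 1) (y + 1) * (y + 1) := hkey
        _ = (y + 1) * Nat.choose (x' + 1 + (y + 1)) (y + 1) := Nat.mul_comm _ _
    | succ x hx ihx =>
      -- hx : m * (y+1) ≤ x, ihx : (x+1) * B m x (y+1) = (x+1 - m*(y+1)) * choose (x+y+1) (y+1)
      have hrec := B_rec m x y (by omega)
      have hih2 : (x + 2) * B m (x + 1) y = (x + 2 - m * y) * Nat.choose (x + y + 1) y := by
        have := ih (x + 1) (by
          have : m * y ≤ m * (y + 1) := Nat.mul_le_mul_left m (by omega)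
          omega)
        have e1 : x + 1 + 1 = x + 2 := by omega
        have e2 : x + 1 + y = x + y + 1 := by omega
        rw [e1, e2] at this
        exact this
      have e3 : x + (y + 1) = x + y + 1 := by omega
      rw [e3] at ihx
      -- key binomial identity
      have hMx : m * (y + 1) ≤ x := hx
      have hmyx : m * y ≤ x := by
        have : m * y ≤ m * (y + 1) := Nat.mul_le_mul_left m (by omega)
        omega
      have hpascal : Nat.choose (x + y + 2) (y + 1)
          = Nat.choose (x + y + 1) y + Nat.choose (x + y + 1) (y + 1) := by
        have := Nat.choose_succ_succ (x + y + 1) y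
        simpa using this
      have hratio : Nat.choose (x + y + 1) (y + 1) * (y + 1)
          = Nat.choose (x + y + 1) y * (x + 1) := by
        have := Nat.choose_succ_right_eq (x + y + 1) y
        have e : x + y + 1 - y = x + 1 := by omega
        rwa [e] at this
      have key : (x + 2) * ((x + 1 - m * (y + 1)) * Nat.choose (x + y + 1) (y + 1))
          + (x + 1) * ((x + 2 - m * y) * Nat.choose (x + y + 1) y)
          = (x + 1) * ((x + 2 - m * (y + 1)) * Nat.choose (x + y + 2) (y + 1)) := by
        rw [hpascal]
        zify [hMx, hmyx, show m * (y+1) ≤ x + 2 by omega, show m * y ≤ x + 2 by omega,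
          show m * (y+1) ≤ x + 1 by omega]
        have hratioZ : ((Nat.choose (x + y + 1) (y + 1) : ℤ)) * ((y : ℤ) + 1)
            = (Nat.choose (x + y + 1) y : ℤ) * ((x : ℤ) + 1) := by exact_mod_cast hratio
        linear_combination (-(m : ℤ)) * hratioZ
      apply Nat.eq_of_mul_eq_mul_left (show 0 < x + 1 by omega)
      calc (x + 1) * ((x + 1 + 1) * B m (x + 1) (y + 1))
          = (x + 2) * ((x + 1) * (B m x (y + 1) + B m (x + 1) y)) := by rw [hrec]; ring
        _ = (x + 2) * ((x + 1) * B m x (y + 1)) + (x + 1) * ((x + 2) * B m (x + 1) y) := by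
            ring
        _ = (x + 2) * ((x + 1 - m * (y + 1)) * Nat.choose (x + y + 1) (y + 1))
            + (x + 1) * ((x + 2 - m * y) * Nat.choose (x + y + 1) y) := by
            rw [ihx, hih2]
        _ = (x + 1) * ((x + 2 - m * (y + 1)) * Nat.choose (x + y + 2) (y + 1)) := key
        _ = (x + 1) * ((x + 1 + 1 - m * (y + 1)) * Nat.choose (x + 1 + (y + 1)) (y + 1)) := by
            congr 3
            omega

/-- The staircase partitions biject with `Bset m (m*n) n`. -/
lemma card_partitions (n m : ℕ) (hn : 1 ≤ n) :
    Nat.card {mu : ℕ → ℕ // Antitone mu ∧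
      (∀ i, n - 1 ≤ i → mu i = 0) ∧ ∀ i < n, mu i ≤ (n - 1 - i) * m} = B m (m * n) n := by
  rw [B, ← Nat.card_eq_finsetCard]
  apply Nat.card_congr
  have hmul : ∀ j : ℕ, j ≤ n → m * j + m * (n - j) = m * n := by
    intro j hj
    rw [← Nat.mul_add, Nat.add_sub_cancel' hj]
  refine
  { toFun := fun μ => ⟨fun j => μ.1 (n - 1 - (j : ℕ)), ?_⟩
    invFun := fun w => ⟨fun i => if h : i < n then w.1 ⟨n - 1 - i, by omega⟩ else 0, ?_, ?_, ?_⟩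
    left_inv := ?_
    right_inv := ?_ }
  · -- membership in Bset
    obtain ⟨μ, hanti, hzero, hbound⟩ := μ
    rw [mem_Bset]
    constructor
    · intro a b hab
      exact hanti (show n - 1 - (b : ℕ) ≤ n - 1 - (a : ℕ) by
        have := Fin.le_def.mp hab; omega)
    · intro i
      have hb := hbound (n - 1 - (i : ℕ)) (by omega)
      have e : n - 1 - (n - 1 - (i : ℕ)) = (i : ℕ) := by
        have := i.2; omega
      rw [e] at hb
      have : μ (n - 1 - (i : ℕ)) + m * (n - (i : ℕ)) ≤ (i : ℕ) * m + m * (n - (i : ℕ)) := by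
        omega
      calc μ (n - 1 - (i : ℕ)) + m * (n - (i : ℕ)) ≤ (i : ℕ) * m + m * (n - (i : ℕ)) := this
        _ = m * (i : ℕ) + m * (n - (i : ℕ)) := by ring_nf
        _ = m * n := hmul (i : ℕ) (by have := i.2; omega)
  · -- Antitone
    obtain ⟨w, hw⟩ := w
    rw [mem_Bset] at hw
    intro a b hab
    by_cases hbn : b < n
    · have han : a < n := by omega
      simp only [dif_pos hbn, dif_pos han]
      exact hw.1 (show (⟨n - 1 - b, by omega⟩ : Fin n) ≤ ⟨n - 1 - a, by omega⟩ by
        rw [Fin.le_def]; simp; omega)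
    · simp only [dif_neg hbn]
      exact Nat.zero_le _
  · -- vanishing at n-1
    obtain ⟨w, hw⟩ := w
    rw [mem_Bset] at hw
    intro i hi
    by_cases hin : i < n
    · simp only [dif_pos hin]
      have e : n - 1 - i = 0 := by omega
      have h0 := hw.2 ⟨n - 1 - i, by omega⟩
      simp only [e] at h0 ⊢
      have : m * (n - 0) = m * n := by norm_num
      omega
    · simp only [dif_neg hin]
  · -- bound
    obtain ⟨w, hw⟩ := w
    rw [mem_Bset] at hw
    intro i hi
    simp only [dif_pos hi]
    have h0 := hw.2 ⟨n - 1 - i, by omega⟩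
    simp only at h0
    have e := hmul (n - 1 - i) (by omega)
    calc w ⟨n - 1 - i, by omega⟩ ≤ m * (n - 1 - i) := by omega
      _ = (n - 1 - i) * m := Nat.mul_comm _ _
  · -- left inverse
    rintro ⟨μ, hanti, hzero, hbound⟩
    apply Subtype.ext
    funext i
    by_cases hin : i < n
    · simp only [dif_pos hin]
      congr 1
      omega
    · simp only [dif_neg hin]
      exact (hzero i (by omega)).symm
  · -- right inverse
    rintro ⟨w, hw⟩
    apply Subtype.ext
    funext j
    have hj : n - 1 - (j : ℕ) < n := by have := j.2; omega
    simp only [dif_pos hj]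
    congr 1
    apply Fin.ext
    simp only []
    have := j.2
    omega

/-- the number of partitions `μ = (μ_1, …, μ_n)` with `μ_n = 0` and
`μ_i ≤ (n-i)·m` is the Fuss–Catalan number `(1/(mn+1))·C((m+1)n, n)`. -/
theorem staircase_partition_count (n m : ℕ) (hn : 1 ≤ n) (hm : 1 ≤ m) :
    (m * n + 1) * Nat.card {mu : ℕ → ℕ // Antitone mu ∧
      (∀ i, n - 1 ≤ i → mu i = 0) ∧ ∀ i < n, mu i ≤ (n - 1 - i) * m} =
    Nat.choose ((m + 1) * n) n := by
  rw [card_partitions n m hn]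
  have := B_formula m hm n (m * n) le_rfl
  have e1 : m * n + 1 - m * n = 1 := by omega
  rw [e1, Nat.one_mul] at this
  rw [this]
  congr 1
  ring

end Shi
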